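/- Let m ≥ 2, let C_1, …, C_m ≥ 0 be integers with C_1 + ⋯ + C_m = B, and let n_1, …, n_m ≥ 1 be natural numbers. Then (n_1 + ⋯ + n_m)^(6(B+1)) ≥ n_1^(6(C_1+1)) + ⋯ + n_m^(6(C_m+1)) + 3m + 1. -/

import Mathlib

lemma pow6_add (a b : ℕ) (ha : 1 ≤ a) (hb : 1 ≤ b) :
    a ^ 6 + b ^ 6 + 7 ≤ (a + b) ^ 6 := by
  have h1 : 1 ≤ a ^ 5 * b := Nat.one_le_iff_ne_zero.mpr (by positivity)
  have h2 : 1 ≤ a ^ 4 * b ^ 2 := Nat.one_le_iff_ne_zero.mpr (by positivity)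
  nlinarith [h1, h2, sq_nonneg (a*b), Nat.zero_le (a^3*b^3)]

lemma sum_pow6 {ι : Type*} [DecidableEq ι] (n : ι → ℕ) (hn : ∀ i, 1 ≤ n i)
    (s : Finset ι) (hs : s.Nonempty) :
    (∑ i ∈ s, n i ^ 6) + 7 * (s.card - 1) ≤ (∑ i ∈ s, n i) ^ 6 := by
  induction hs using Finset.Nonempty.cons_induction with
  | singleton i => simp
  | cons i s hi hs ih =>
    rw [Finset.sum_cons, Finset.sum_cons, Finset.card_cons]
    have h1 : 1 ≤ ∑ j ∈ s, n j :=
      le_trans (hn hs.choose) (Finset.single_le_sum (fun j _ => Nat.zero_le _) hs.choose_spec)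
    have h2 := pow6_add (n i) (∑ j ∈ s, n j) (hn i) h1
    have hcard : 1 ≤ s.card := Finset.card_pos.mpr hs
    omega

theorem stmt2 {m B : ℕ} (hm : 2 ≤ m) (C : Fin m → ℕ) (hC : ∑ i, C i = B)
    (n : Fin m → ℕ) (hn : ∀ i, 1 ≤ n i) :
    (∑ i, n i ^ (6 * (C i + 1))) + 3 * m + 1 ≤ (∑ i, n i) ^ (6 * (B + 1)) := by
  set S := ∑ i, n i with hS
  have hSone : 1 ≤ S := by
    exact le_trans (hn (⟨0, by omega⟩ : Fin m))
      (Finset.single_le_sum (fun j _ => Nat.zero_le _) (Finset.mem_univ (⟨0, by omega⟩ : Fin m)))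
  -- each term bound
  have hterm : ∀ i, n i ^ (6 * (C i + 1)) ≤ S ^ (6 * B) * n i ^ 6 := by
    intro i
    have hCi : C i ≤ B := by
      rw [← hC]; exact Finset.single_le_sum (fun j _ => Nat.zero_le _) (Finset.mem_univ i)
    have hni : n i ≤ S := Finset.single_le_sum (fun j _ => Nat.zero_le _) (Finset.mem_univ i)
    calc n i ^ (6 * (C i + 1)) = n i ^ (6 * C i) * n i ^ 6 := by ring
      _ ≤ S ^ (6 * C i) * n i ^ 6 := by
          exact Nat.mul_le_mul_right _ (Nat.pow_le_pow_left hni _)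
      _ ≤ S ^ (6 * B) * n i ^ 6 := by
          exact Nat.mul_le_mul_right _ (Nat.pow_le_pow_right hSone (by omega))
  have hsum : (∑ i, n i ^ (6 * (C i + 1))) ≤ S ^ (6 * B) * ∑ i, n i ^ 6 := by
    rw [Finset.mul_sum]
    exact Finset.sum_le_sum fun i _ => hterm i
  have h6 : (∑ i, n i ^ 6) + 7 * (m - 1) ≤ S ^ 6 := by
    have hne : (Finset.univ : Finset (Fin m)).Nonempty := ⟨⟨0, by omega⟩, Finset.mem_univ _⟩
    have := sum_pow6 n hn Finset.univ hne
    simpa using this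
  have h7 : (∑ i, n i ^ 6) + (3 * m + 1) ≤ S ^ 6 := by omega
  have key : S ^ (6 * B) * ((∑ i, n i ^ 6) + (3 * m + 1)) ≤ S ^ (6 * (B + 1)) := by
    calc S ^ (6 * B) * ((∑ i, n i ^ 6) + (3 * m + 1)) ≤ S ^ (6 * B) * S ^ 6 :=
          Nat.mul_le_mul_left _ h7
      _ = S ^ (6 * (B + 1)) := by ring
  have expand : S ^ (6 * B) * ((∑ i, n i ^ 6) + (3 * m + 1))
      = S ^ (6 * B) * (∑ i, n i ^ 6) + S ^ (6 * B) * (3 * m + 1) := by ring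
  have hpow1 : 3 * m + 1 ≤ S ^ (6 * B) * (3 * m + 1) :=
    Nat.le_mul_of_pos_left _ (Nat.pow_pos hSone)
  calc (∑ i, n i ^ (6 * (C i + 1))) + 3 * m + 1
      ≤ S ^ (6 * B) * (∑ i, n i ^ 6) + S ^ (6 * B) * (3 * m + 1) := by
        have := hsum; have := hpow1; omega
    _ = S ^ (6 * B) * ((∑ i, n i ^ 6) + (3 * m + 1)) := expand.symm
    _ ≤ S ^ (6 * (B + 1)) := key
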